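/- Let e₀ > 0, C > 0, and let a : [T₀, t_in] → ℝ be differentiable with a(t_in) = 0 and |a'(s) - e₀ a(s)| ≤ C s^{-2} for all s in [T₀, t_in]. Then there is a constant C' depending only on e₀ and C (not on t_in) such that |a(t)| ≤ C' t^{-2} for all t in [T₀, t_in] with T₀ ≥ 1. -/

import Mathlib

theorem stmt9 (e₀ C : ℝ) (he : 0 < e₀) (hC : 0 < C) :
    ∃ C' > 0, ∀ (T₀ tin : ℝ) (a a' : ℝ → ℝ), 1 ≤ T₀ → T₀ ≤ tin →
      (∀ s ∈ Set.Icc T₀ tin, HasDerivAt a (a' s) s) →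
      a tin = 0 →
      (∀ s ∈ Set.Icc T₀ tin, |a' s - e₀ * a s| ≤ C / s ^ 2) →
      ∀ t ∈ Set.Icc T₀ tin, |a t| ≤ C' / t ^ 2 := by
  refine ⟨C / e₀, by positivity, ?_⟩
  intro T₀ tin a a' hT₀ htin hderiv ha0 hbound t ht
  obtain ⟨htT₀, httin⟩ := ht
  have ht1 : (1:ℝ) ≤ t := le_trans hT₀ htT₀
  have ht0 : 0 < t := lt_of_lt_of_le one_pos ht1
  set g : ℝ → ℝ := fun s => Real.exp (-e₀ * s) * a s with hg
  set K : ℝ := C / t ^ 2 with hK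
  have hK0 : 0 < K := by positivity
  set ψ : ℝ → ℝ := fun s => -(K / e₀) * Real.exp (-e₀ * s) with hψ
  have hsub : Set.Icc t tin ⊆ Set.Icc T₀ tin := Set.Icc_subset_Icc htT₀ le_rfl
  have hexp : ∀ s : ℝ, HasDerivAt (fun s => Real.exp (-e₀ * s))
      (-e₀ * Real.exp (-e₀ * s)) s := by
    intro s
    have := ((hasDerivAt_id s).const_mul (-e₀)).exp
    simpa [mul_comm] using this
  have hgderiv : ∀ s ∈ Set.Icc T₀ tin,
      HasDerivAt g (Real.exp (-e₀ * s) * (a' s - e₀ * a s)) s := by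
    intro s hs
    have := (hexp s).mul (hderiv s hs)
    exact this.congr_deriv (by ring)
  have hψderiv : ∀ s : ℝ, HasDerivAt ψ (K * Real.exp (-e₀ * s)) s := by
    intro s
    have := (hexp s).const_mul (-(K / e₀))
    exact this.congr_deriv (by field_simp)
  have key : ∀ ε : ℝ, ε = 1 ∨ ε = -1 → ψ t + ε * g t ≤ ψ tin + ε * g tin := by
    intro ε hε
    have hεabs : |ε| = 1 := by rcases hε with h | h <;> simp [h]
    have hF : ∀ s ∈ Set.Icc t tin, HasDerivAt (fun s => ψ s + ε * g s)
        (K * Real.exp (-e₀ * s) + ε * (Real.exp (-e₀ * s) * (a' s - e₀ * a s))) s := by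
      intro s hs
      exact (hψderiv s).add ((hgderiv s (hsub hs)).const_mul ε)
    have hmono : MonotoneOn (fun s => ψ s + ε * g s) (Set.Icc t tin) := by
      apply monotoneOn_of_deriv_nonneg (convex_Icc t tin)
      · exact fun x hx => (hF x hx).continuousAt.continuousWithinAt
      · intro x hx
        rw [interior_Icc] at hx
        exact ((hF x (Set.mem_Icc_of_Ioo hx)).differentiableAt).differentiableWithinAt
      · intro x hx
        rw [interior_Icc] at hx
        rw [(hF x (Set.mem_Icc_of_Ioo hx)).deriv]
        have hx' : x ∈ Set.Icc T₀ tin := hsub (Set.mem_Icc_of_Ioo hx)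
        have hxt : t ≤ x := le_of_lt hx.1
        have hb : |a' x - e₀ * a x| ≤ K := by
          refine (hbound x hx').trans ?_
          rw [hK]
          apply div_le_div_of_nonneg_left hC.le (by positivity)
          exact pow_le_pow_left₀ ht0.le hxt 2
        have habs : |ε * (Real.exp (-e₀ * x) * (a' x - e₀ * a x))|
            ≤ K * Real.exp (-e₀ * x) := by
          rw [abs_mul, hεabs, one_mul, abs_mul, abs_of_pos (Real.exp_pos _)]
          calc Real.exp (-e₀ * x) * |a' x - e₀ * a x|
              ≤ Real.exp (-e₀ * x) * K := by
                exact mul_le_mul_of_nonneg_left hb (Real.exp_pos _).le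
            _ = K * Real.exp (-e₀ * x) := mul_comm _ _
        linarith [neg_abs_le (ε * (Real.exp (-e₀ * x) * (a' x - e₀ * a x))), habs]
    exact hmono (Set.left_mem_Icc.2 httin) (Set.right_mem_Icc.2 httin) httin
  have hgtin : g tin = 0 := by simp [hg, ha0]
  have hbnd : |g t| ≤ (K / e₀) * Real.exp (-e₀ * t) := by
    have h1 := key 1 (Or.inl rfl)
    have h2 := key (-1) (Or.inr rfl)
    rw [hgtin] at h1 h2
    have hψt : ψ tin ≤ 0 := by
      rw [hψ]
      simp only
      have : 0 < Real.exp (-e₀ * tin) := Real.exp_pos _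
      nlinarith [div_pos hK0 he]
    have hpos : 0 ≤ K / e₀ * Real.exp (-e₀ * tin) :=
      (mul_pos (div_pos hK0 he) (Real.exp_pos _)).le
    rw [abs_le]
    simp only [hψ] at h1 h2
    constructor
    · linarith
    · linarith
  have hat : |a t| = Real.exp (e₀ * t) * |g t| := by
    rw [hg]
    simp only
    rw [abs_mul, abs_of_pos (Real.exp_pos _), ← mul_assoc, ← Real.exp_add]
    simp
  rw [hat]
  calc Real.exp (e₀ * t) * |g t| ≤ Real.exp (e₀ * t) * ((K / e₀) * Real.exp (-e₀ * t)) :=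
        mul_le_mul_of_nonneg_left hbnd (Real.exp_pos _).le
    _ = (K / e₀) * (Real.exp (e₀ * t) * Real.exp (-e₀ * t)) := by ring
    _ = K / e₀ := by rw [← Real.exp_add]; simp
    _ = C / e₀ / t ^ 2 := by rw [hK]; ring
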